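/- Let u : 𝔸 → S¹ be continuous and suppose u(x) → λ ∈ S¹ along the cocompact filter of 𝔸 (i.e., for every ε > 0 there is a compact set K ⊆ 𝔸 with |u(x) − λ| < ε for all x ∉ K). Then: (i) for every x_f ∈ 𝔸_f the function u_{x_f}(t) = u(t, x_f) on ℝ has limit λ at both +∞ and −∞, so it has a well-defined integer winding number w(x_f) = lim_{x→+∞} (ũ_{x_f}(x) − ũ_{x_f}(−x)) for any lift ũ_{x_f}; (ii) the resulting function w : 𝔸_f → ℤ is continuous (with ℤ discrete) and vanishes outside a compact subset of 𝔸_f. -/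

import Mathlib

open Filter IsDedekindDomain

noncomputable section

/-- The finite adele ring `𝔸_f` of `ℚ`: the restricted product of the fields `ℚ_p` with
respect to the subrings `ℤ_p`, with the restricted product topology. -/
abbrev FiniteAdeles : Type := FiniteAdeleRing ℤ ℚ

/-- The adele ring `𝔸 = ℝ × 𝔸_f` of `ℚ`. -/
abbrev AdeleRingQ : Type := ℝ × FiniteAdeles

/-- The diagonal embedding `ι : ℚ → 𝔸`, `q ↦ (q, (q)_p)`. -/
def diag (q : ℚ) : AdeleRingQ := ((q : ℝ), algebraMap ℚ FiniteAdeles q)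

/-- A function on the adele ring is `ℚ`-periodic if it is invariant under translation by
every diagonally embedded rational. -/
def QPeriodic {β : Type*} (g : AdeleRingQ → β) : Prop :=
  ∀ (x : AdeleRingQ) (α : ℚ), g (x + diag α) = g x

/-- A continuous function `f : ℝ → ℂ` taking values in the unit circle `S¹` is *pre-periodic*
if for every `ε > 0` there is a positive integer `N` such that
`|f (x + k * N) - f x| < ε` for all integers `k` and all real `x`. -/
def PrePeriodic (f : ℝ → ℂ) : Prop :=
  Continuous f ∧ (∀ x : ℝ, ‖f x‖ = 1) ∧
    ∀ ε : ℝ, 0 < ε → ∃ N : ℕ, 0 < N ∧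
      ∀ (k : ℤ) (x : ℝ), ‖f (x + (k : ℝ) * (N : ℝ)) - f x‖ < ε

/-- `F : ℝ → ℝ` is a lift of `f : ℝ → S¹ ⊆ ℂ` if `F` is continuous and
`f x = e^{2 π i F x}` for all `x`. -/
def IsLift (f : ℝ → ℂ) (F : ℝ → ℝ) : Prop :=
  Continuous F ∧ ∀ x : ℝ, f x = Complex.exp (2 * Real.pi * Complex.I * (F x : ℂ))

namespace WindAux

/-- normalized argument: `arg z / (2π)`. -/
def ph (z : ℂ) : ℝ := Complex.arg z / (2 * Real.pi)

lemma two_pi_I_ne : (2 * (Real.pi:ℂ) * Complex.I) ≠ 0 := by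
  simp [Real.pi_ne_zero, Complex.I_ne_zero]

lemma exp_ph {z : ℂ} (hz : ‖z‖ = 1) :
    Complex.exp (2 * Real.pi * Complex.I * (ph z : ℝ)) = z := by
  have hpi : (Real.pi:ℂ) ≠ 0 := Complex.ofReal_ne_zero.mpr Real.pi_ne_zero
  have h : (2 * (Real.pi:ℂ) * Complex.I * (ph z : ℝ)) = Complex.arg z * Complex.I := by
    rw [ph]
    push_cast
    field_simp
  rw [h]
  have := Complex.norm_mul_exp_arg_mul_I z
  rwa [hz, Complex.ofReal_one,
    one_mul] at this

lemma ph_one : ph 1 = 0 := by simp [ph, Complex.arg_one]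

lemma continuousAt_ph {z : ℂ} (h : 0 < z.re) : ContinuousAt ph z :=
  (Complex.continuousAt_arg (Or.inl h)).div_const _

/-- If two unit vectors are within distance 1, their ratio has real part ≥ 1/2. -/
lemma re_div_ge {z w : ℂ} (hz : ‖z‖ = 1) (hw : ‖w‖ = 1) (h : ‖z - w‖ ≤ 1) :
    (1:ℝ)/2 ≤ (z / w).re := by
  have hw0 : w ≠ 0 := by intro h0; rw [h0] at hw; simp at hw
  have h1 : ‖z / w - 1‖ ≤ 1 := by
    have : (z - w) / w = z / w - 1 := by rw [sub_div, div_self hw0]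
    rw [← this, norm_div, hw, div_one]
    exact h
  set v := z / w with hv
  have hnv : ‖v‖ = 1 := by rw [hv, norm_div, hz, hw]; norm_num
  have h2 : Complex.normSq (v - 1) ≤ 1 := by
    have := Complex.sq_norm (v - 1)
    nlinarith [h1, norm_nonneg (v-1),
      Complex.sq_norm (v-1)]
  have h3 : Complex.normSq v = 1 := by
    have := Complex.sq_norm v
    nlinarith [hnv]
  have e : Complex.normSq (v - 1) = Complex.normSq v - 2 * v.re + 1 := by
    simp [Complex.normSq_apply, Complex.sub_re, Complex.sub_im]
    ring
  rw [e, h3] at h2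
  linarith

/-- A continuous function on a preconnected set taking integer values is constant. -/
lemma int_valued_const {s : Set ℝ} (hs : IsPreconnected s) {g : ℝ → ℝ}
    (hg : ContinuousOn g s) (hint : ∀ x ∈ s, ∃ n : ℤ, g x = n) :
    ∀ x ∈ s, ∀ y ∈ s, g x = g y := by
  have key : ∀ x ∈ s, ∀ y ∈ s, g x ≤ g y → g x = g y := by
    intro x hx y hy hle
    by_contra hne
    have hlt : g x < g y := lt_of_le_of_ne hle hne
    obtain ⟨n, hn⟩ := hint x hx
    obtain ⟨m, hm⟩ := hint y hy
    have hnm : n < m := by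
      rw [hn, hm] at hlt; exact_mod_cast hlt
    have hmem : g x + 1/2 ∈ Set.Icc (g x) (g y) := by
      constructor
      · linarith
      · rw [hn, hm]
        have : (n:ℝ) + 1 ≤ m := by exact_mod_cast hnm
        linarith
    obtain ⟨z, hzs, hz⟩ := hs.intermediate_value hx hy hg hmem
    obtain ⟨k, hk⟩ := hint z hzs
    rw [hk, hn] at hz
    have : (2*k : ℝ) = 2*n + 1 := by linarith
    have : 2*k = 2*n+1 := by exact_mod_cast this
    omega
  intro x hx y hy
  rcases le_total (g x) (g y) with h | h
  · exact key x hx y hy h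
  · exact (key y hy x hx h).symm


lemma exp2 (a b : ℝ) : Complex.exp (2 * Real.pi * Complex.I * ((a + b : ℝ) : ℂ))
    = Complex.exp (2 * Real.pi * Complex.I * (a:ℂ)) *
      Complex.exp (2 * Real.pi * Complex.I * (b:ℂ)) := by
  rw [← Complex.exp_add]
  push_cast
  ring_nf

lemma exists_lift {f : ℝ → ℂ} (hc : Continuous f) (hs : ∀ x, ‖f x‖ = 1)
    {h : ℝ} (hh : 0 < h) (hstep : ∀ s t : ℝ, |s - t| ≤ h → ‖f s - f t‖ ≤ 1) :
    ∃ F : ℝ → ℝ, Continuous F ∧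
      ∀ x, f x = Complex.exp (2 * Real.pi * Complex.I * (F x : ℂ)) := by
  have fne : ∀ x, f x ≠ 0 := fun x => by
    intro h0; have := hs x; rw [h0] at this; simp at this
  -- increments and cumulative sums
  set d : ℤ → ℝ := fun j => ph (f (((j:ℝ) + 1) * h) / f ((j:ℝ) * h)) with hd
  set c : ℤ → ℝ := fun n => ph (f 0) + (∑ j ∈ Finset.range n.toNat, d j)
      - (∑ j ∈ Finset.range (-n).toNat, d (-(j:ℤ) - 1)) with hcdef
  have crec : ∀ n : ℤ, c (n + 1) = c n + d n := by
    intro n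
    rcases le_or_gt 0 n with hn | hn
    · have h1 : (n + 1).toNat = n.toNat + 1 := by omega
      have h2 : (-(n + 1)).toNat = 0 := by omega
      have h3 : (-n).toNat = 0 := by omega
      simp only [hcdef, h1, h2, h3, Finset.range_zero, Finset.sum_empty,
        Finset.sum_range_succ, sub_zero]
      have : (n.toNat : ℤ) = n := Int.toNat_of_nonneg hn
      rw [this]
      ring
    · have h1 : (n + 1).toNat = 0 := by omega
      have h2 : n.toNat = 0 := by omega
      have h3 : (-n).toNat = (-(n + 1)).toNat + 1 := by omega
      simp only [hcdef, h1, h2, h3, Finset.range_zero, Finset.sum_empty,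
        Finset.sum_range_succ]
      have : -(((-(n + 1)).toNat : ℤ)) - 1 = n := by omega
      rw [this]
      ring
  -- exp of c at grid points
  have hnorm : ∀ s t : ℝ, ‖f s / f t‖ = 1 := fun s t => by
    rw [norm_div, hs, hs]; norm_num
  have cg : ∀ n : ℤ, Complex.exp (2 * Real.pi * Complex.I * (c n : ℂ)) = f ((n:ℝ) * h) := by
    intro n
    induction n using Int.induction_on with
    | zero =>
      have : c 0 = ph (f 0) := by simp [hcdef]
      rw [this]
      rw [exp_ph (hs 0)]
      norm_num
    | succ i ih =>
      rw [crec i, exp2, ih, exp_ph (hnorm _ _)]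
      push_cast
      field_simp
      exact mul_div_cancel_left₀ _ (fne _)
    | pred i ih =>
      have := crec (-(i:ℤ) - 1)
      have e : (-(i:ℤ) - 1) + 1 = -(i:ℤ) := by ring
      rw [e] at this
      have : c (-(i:ℤ) - 1) = c (-(i:ℤ)) - d (-(i:ℤ) - 1) := by linarith [this]
      rw [show c (-(i:ℤ) - 1) = c (-(i:ℤ)) + (- d (-(i:ℤ) - 1)) by linarith, exp2, ih]
      have hex : Complex.exp (2 * Real.pi * Complex.I * ((- d (-(i:ℤ) - 1) : ℝ) : ℂ))
          = (f ((-(i:ℝ) - 1 + 1) * h) / f ((-(i:ℝ) - 1) * h))⁻¹ := by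
        rw [← exp_ph (hnorm (((-(i:ℝ) - 1) + 1) * h) ((-(i:ℝ) - 1) * h)), ← Complex.exp_neg]
        congr 1
        push_cast [hd]
        ring_nf
      rw [hex]
      have e2 : (-(i:ℝ) - 1 + 1) = -(i:ℝ) := by ring
      rw [e2]
      push_cast
      field_simp
      exact mul_div_cancel_left₀ _ (fne _)
  -- the candidate lift
  set Fn : ℤ → ℝ → ℝ := fun n x => c n + ph (f x / f ((n:ℝ) * h)) with hFn
  set F : ℝ → ℝ := fun x => Fn ⌊x / h⌋ x with hF
  have ratio_re : ∀ (n : ℤ) (x : ℝ), (n:ℝ) * h ≤ x → x ≤ ((n:ℝ) + 1) * h →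
      0 < (f x / f ((n:ℝ) * h)).re := by
    intro n x h1 h2
    have hdist : |x - (n:ℝ) * h| ≤ h := by
      rw [abs_le]; constructor <;> nlinarith
    have := re_div_ge (hs x) (hs ((n:ℝ) * h)) (hstep _ _ hdist)
    linarith
  have contFn : ∀ (n : ℤ) (x : ℝ), (n:ℝ) * h ≤ x → x ≤ ((n:ℝ) + 1) * h →
      ContinuousAt (Fn n) x := by
    intro n x h1 h2
    apply ContinuousAt.add continuousAt_const
    have hdivc : ContinuousAt (fun y : ℝ => f y / f ((n:ℝ) * h)) x :=
      hc.continuousAt.div_const _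
    exact ContinuousAt.comp (g := ph) (continuousAt_ph (ratio_re n x h1 h2)) hdivc
  have floor_eq : ∀ (n : ℤ) (x : ℝ), (n:ℝ) * h ≤ x → x < ((n:ℝ) + 1) * h →
      ⌊x / h⌋ = n := by
    intro n x h1 h2
    rw [Int.floor_eq_iff]
    constructor
    · rw [le_div_iff₀ hh]; linarith
    · rw [div_lt_iff₀ hh]; push_cast; linarith
  have FeqFn : ∀ (n : ℤ) (x : ℝ), (n:ℝ) * h ≤ x → x ≤ ((n:ℝ) + 1) * h →
      F x = Fn n x := by
    intro n x h1 h2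
    rcases lt_or_eq_of_le h2 with h2' | h2'
    · simp only [hF, floor_eq n x h1 h2']
    · have hfl : ⌊x / h⌋ = n + 1 := by
        rw [h2', mul_div_cancel_right₀ _ (ne_of_gt hh)]
        rw [show ((n:ℝ) + 1) = ((n + 1 : ℤ) : ℝ) by push_cast; ring, Int.floor_intCast]
      have e1 : Fn (n+1) x = c (n+1) := by
        simp only [hFn]
        have : f x / f (((n+1 : ℤ) : ℝ) * h) = 1 := by
          rw [div_eq_one_iff_eq (fne _)]
          congr 1
          rw [h2']; push_cast; ring
        rw [this, ph_one, add_zero]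
      have e2 : Fn n x = c n + d n := by
        simp only [hFn, hd]
        congr 2
        rw [h2']
      simp only [hF, hfl]
      rw [e1, e2, crec n]
  have contF : Continuous F := by
    rw [continuous_iff_continuousAt]
    intro x
    have h1 : ((⌊x/h⌋:ℝ)) * h ≤ x := by
      have := Int.floor_le (x / h)
      calc ((⌊x/h⌋:ℝ)) * h ≤ (x / h) * h := by nlinarith
        _ = x := div_mul_cancel₀ x (ne_of_gt hh)
    have h2 : x < ((⌊x/h⌋:ℝ) + 1) * h := by
      have := Int.lt_floor_add_one (x / h)
      calc x = (x / h) * h := (div_mul_cancel₀ x (ne_of_gt hh)).symm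
        _ < ((⌊x/h⌋:ℝ) + 1) * h := by nlinarith
    set n := ⌊x / h⌋ with hn
    rcases eq_or_lt_of_le h1 with heq | hlt
    · rw [continuousAt_iff_continuous_left_right]
      have hb1 : ((n - 1 : ℤ) : ℝ) * h ≤ x := by push_cast; nlinarith
      have hb2 : x ≤ (((n - 1 : ℤ) : ℝ) + 1) * h := by push_cast; nlinarith
      constructor
      · have hcw : ContinuousWithinAt (Fn (n-1)) (Set.Iic x) x :=
          (contFn (n-1) x hb1 hb2).continuousWithinAt
        apply hcw.congr_of_eventuallyEq ?_ (FeqFn (n-1) x hb1 hb2)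
        have hmem : Set.Ioi (((n - 1 : ℤ) : ℝ) * h) ∈ nhds x := by
          apply Ioi_mem_nhds; push_cast; nlinarith
        filter_upwards [self_mem_nhdsWithin,
          nhdsWithin_le_nhds hmem] with y hy1 hy2
        apply FeqFn (n-1) y (le_of_lt hy2)
        have : y ≤ x := hy1
        push_cast
        push_cast at hb2
        linarith
      · have hcw : ContinuousWithinAt (Fn n) (Set.Ici x) x :=
          (contFn n x h1 (le_of_lt h2)).continuousWithinAt
        apply hcw.congr_of_eventuallyEq ?_ (FeqFn n x h1 (le_of_lt h2))
        have hmem : Set.Iio (((n:ℝ)+1) * h) ∈ nhds x := Iio_mem_nhds h2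
        filter_upwards [self_mem_nhdsWithin,
          nhdsWithin_le_nhds hmem] with y hy1 hy2
        exact FeqFn n y (le_trans h1 hy1) (le_of_lt hy2)
    · apply ContinuousAt.congr (contFn n x h1 (le_of_lt h2))
      filter_upwards [Ioo_mem_nhds hlt h2] with y hy
      exact (FeqFn n y (le_of_lt hy.1) (le_of_lt hy.2)).symm
  refine ⟨F, contF, fun x => ?_⟩
  have hFx : F x = c ⌊x/h⌋ + ph (f x / f ((⌊x/h⌋:ℝ) * h)) := rfl
  rw [hFx, exp2, cg ⌊x/h⌋, exp_ph (hnorm _ _)]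
  rw [mul_div_assoc']
  exact (mul_div_cancel_left₀ _ (fne _)).symm

lemma two_pi_I_ne' : (2 * (Real.pi:ℂ) * Complex.I) ≠ 0 := by
  simp [Real.pi_ne_zero, Complex.I_ne_zero]

lemma expneg (r : ℝ) : Complex.exp (2 * Real.pi * Complex.I * ((-r : ℝ) : ℂ))
    = (Complex.exp (2 * Real.pi * Complex.I * (r:ℂ)))⁻¹ := by
  rw [← Complex.exp_neg]; congr 1; push_cast; ring

lemma exp_int (n : ℤ) : Complex.exp (2 * Real.pi * Complex.I * ((n:ℝ) : ℂ)) = 1 := by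
  have := Complex.exp_int_mul_two_pi_mul_I n
  rw [← this]; congr 1; push_cast; ring

/-- From `exp (2πi r) = 1` deduce `r` is an integer. -/
lemma int_of_exp_eq_one {r : ℝ} (h : Complex.exp (2 * Real.pi * Complex.I * (r:ℂ)) = 1) :
    ∃ n : ℤ, r = n := by
  rw [Complex.exp_eq_one_iff] at h
  obtain ⟨n, hn⟩ := h
  refine ⟨n, ?_⟩
  have : (r : ℂ) = n := by
    have h2 : (r:ℂ) * (2 * Real.pi * Complex.I) = (n:ℂ) * (2 * Real.pi * Complex.I) := by
      rw [← hn]; ring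
    exact mul_right_cancel₀ two_pi_I_ne' h2
  exact_mod_cast this

lemma lift_limit {f : ℝ → ℂ} {F : ℝ → ℝ} {lam : ℂ} (hlam : ‖lam‖ = 1)
    (hcf : Continuous f) (hs : ∀ x, ‖f x‖ = 1)
    (hlift : ∀ x, f x = Complex.exp (2 * Real.pi * Complex.I * (F x : ℂ)))
    (hFc : Continuous F)
    {l : Filter ℝ} {s : Set ℝ} {x₀ : ℝ} (hx₀ : x₀ ∈ s) (hsl : s ∈ l)
    (hsp : IsPreconnected s)
    (hcl : ∀ x ∈ s, ‖f x - lam‖ ≤ 1)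
    (hconv : Tendsto f l (nhds lam)) :
    ∃ a : ℝ, Tendsto F l (nhds a) ∧ Complex.exp (2 * Real.pi * Complex.I * (a:ℂ)) = lam := by
  have lamne : lam ≠ 0 := fun h0 => by rw [h0] at hlam; simp at hlam
  have fne : ∀ x, f x ≠ 0 := fun x h0 => by have := hs x; rw [h0] at this; simp at this
  set t₀ := ph lam with ht₀
  set g : ℝ → ℝ := fun x => F x - ph (f x / lam) - t₀ with hg
  have hre : ∀ x ∈ s, 0 < (f x / lam).re := by
    intro x hx
    have := re_div_ge (hs x) hlam (hcl x hx)
    linarith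
  have contg : ContinuousOn g s := by
    apply ContinuousOn.sub ?_ continuousOn_const
    apply ContinuousOn.sub hFc.continuousOn
    intro x hx
    apply ContinuousAt.continuousWithinAt
    exact ContinuousAt.comp (g := ph) (continuousAt_ph (hre x hx))
      (hcf.continuousAt.div_const _)
  have intg : ∀ x ∈ s, ∃ n : ℤ, g x = n := by
    intro x hx
    apply int_of_exp_eq_one
    have e1 : g x = F x + (-(ph (f x / lam)) + (-t₀)) := by rw [hg]; ring
    rw [e1, exp2, exp2, expneg, expneg, ← hlift x, exp_ph (by rw [norm_div, hs, hlam]; norm_num),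
      exp_ph hlam]
    field_simp
    exact div_self (fne x)
  have gconst : ∀ x ∈ s, g x = g x₀ := fun x hx => int_valued_const hsp contg intg x hx x₀ hx₀
  have hdiv : Tendsto (fun x => f x / lam) l (nhds 1) := by
    have := hconv.div_const lam
    rwa [div_self lamne] at this
  have hph : Tendsto (fun x => ph (f x / lam)) l (nhds 0) := by
    have h1 : ContinuousAt ph 1 := continuousAt_ph (by norm_num)
    have := h1.tendsto.comp hdiv
    rwa [ph_one] at this
  refine ⟨g x₀ + t₀, ?_, ?_⟩
  · have heq : (fun x => g x₀ + ph (f x / lam) + t₀) =ᶠ[l] F := by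
      filter_upwards [hsl] with x hx
      rw [← gconst x hx]
      simp only [hg]
      ring
    have : Tendsto (fun x => g x₀ + ph (f x / lam) + t₀) l (nhds (g x₀ + 0 + t₀)) :=
      (tendsto_const_nhds.add hph).add tendsto_const_nhds
    rw [show g x₀ + 0 + t₀ = g x₀ + t₀ by ring] at this
    exact Tendsto.congr' heq this
  · obtain ⟨n, hn⟩ := intg x₀ hx₀
    rw [exp2, hn, exp_int, one_mul, ht₀, exp_ph hlam]

lemma winding_compare {f g : ℝ → ℂ} {F G : ℝ → ℝ}
    (hcf : Continuous f) (hcg : Continuous g)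
    (hsf : ∀ x, ‖f x‖ = 1) (hsg : ∀ x, ‖g x‖ = 1)
    (hFc : Continuous F) (hGc : Continuous G)
    (hliftF : ∀ x, f x = Complex.exp (2 * Real.pi * Complex.I * (F x : ℂ)))
    (hliftG : ∀ x, g x = Complex.exp (2 * Real.pi * Complex.I * (G x : ℂ)))
    (hclose : ∀ x, ‖f x - g x‖ ≤ 1)
    {a₁ b₁ a₂ b₂ : ℝ}
    (ha₁ : Tendsto F atTop (nhds a₁)) (hb₁ : Tendsto F atBot (nhds b₁))
    (ha₂ : Tendsto G atTop (nhds a₂)) (hb₂ : Tendsto G atBot (nhds b₂))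
    (hq1 : Tendsto (fun x => f x / g x) atTop (nhds 1))
    (hq2 : Tendsto (fun x => f x / g x) atBot (nhds 1)) :
    a₁ - b₁ = a₂ - b₂ := by
  have gne : ∀ x, g x ≠ 0 := fun x h0 => by have := hsg x; rw [h0] at this; simp at this
  set H : ℝ → ℝ := fun x => F x - G x - ph (f x / g x) with hH
  have hre : ∀ x : ℝ, 0 < (f x / g x).re := by
    intro x
    have := re_div_ge (hsf x) (hsg x) (hclose x)
    linarith
  have contH : Continuous H := by
    apply Continuous.sub (hFc.sub hGc)
    rw [continuous_iff_continuousAt]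
    intro x
    exact ContinuousAt.comp (g := ph) (continuousAt_ph (hre x))
      ((hcf.continuousAt).div (hcg.continuousAt) (gne x))
  have intH : ∀ x : ℝ, ∃ n : ℤ, H x = n := by
    intro x
    apply int_of_exp_eq_one
    have e1 : H x = F x + (-(G x) + (-(ph (f x / g x)))) := by rw [hH]; ring
    rw [e1, exp2, exp2, expneg, expneg, ← hliftF x, ← hliftG x,
      exp_ph (by rw [norm_div, hsf, hsg]; norm_num)]
    field_simp
    have fne : f x ≠ 0 := fun h0 => by have := hsf x; rw [h0] at this; simp at this
    rw [mul_comm (f x) (g x)]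
    exact div_self (mul_ne_zero (gne x) fne)
  have Hconst : ∀ x : ℝ, H x = H 0 := fun x =>
    int_valued_const isPreconnected_univ contH.continuousOn
      (fun y _ => intH y) x trivial 0 trivial
  have hph1 : Tendsto (fun x => ph (f x / g x)) atTop (nhds 0) := by
    have h1 : ContinuousAt ph 1 := continuousAt_ph (by norm_num)
    have := h1.tendsto.comp hq1
    rwa [ph_one] at this
  have hph2 : Tendsto (fun x => ph (f x / g x)) atBot (nhds 0) := by
    have h1 : ContinuousAt ph 1 := continuousAt_ph (by norm_num)
    have := h1.tendsto.comp hq2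
    rwa [ph_one] at this
  have l1 : Tendsto H atTop (nhds (a₁ - a₂ - 0)) := (ha₁.sub ha₂).sub hph1
  have l2 : Tendsto H atBot (nhds (b₁ - b₂ - 0)) := (hb₁.sub hb₂).sub hph2
  have c1 : a₁ - a₂ - 0 = H 0 := by
    apply tendsto_nhds_unique l1
    exact Tendsto.congr (fun x => (Hconst x).symm) tendsto_const_nhds
  have c2 : b₁ - b₂ - 0 = H 0 := by
    apply tendsto_nhds_unique l2
    exact Tendsto.congr (fun x => (Hconst x).symm) tendsto_const_nhds
  linarith


end WindAux

open WindAux in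
/-- Let `u : 𝔸 → S¹` be continuous with `u → λ` along the cocompact filter of `𝔸`.  Then
(i) for every finite adele `x_f`, the function `t ↦ u (t, x_f)` has limit `λ` at both
`+∞` and `-∞`, it admits a lift, and any lift computes an integer winding number
`w x_f`; (ii) the function `w : 𝔸_f → ℤ` is continuous (with `ℤ` discrete) and vanishes
outside a compact subset of `𝔸_f`. -/
theorem cocompact_convergent_winding_function (u : AdeleRingQ → ℂ) (lam : ℂ)
    (hc : Continuous u) (hs : ∀ x : AdeleRingQ, ‖u x‖ = 1) (hlam : ‖lam‖ = 1)
    (hconv : Tendsto u (cocompact AdeleRingQ) (nhds lam)) :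
    ∃ w : FiniteAdeles → ℤ,
      (∀ xf : FiniteAdeles, Tendsto (fun t : ℝ => u (t, xf)) atTop (nhds lam) ∧
        Tendsto (fun t : ℝ => u (t, xf)) atBot (nhds lam)) ∧
      (∀ xf : FiniteAdeles, ∃ F : ℝ → ℝ, IsLift (fun t : ℝ => u (t, xf)) F) ∧
      (∀ (xf : FiniteAdeles) (F : ℝ → ℝ), IsLift (fun t : ℝ => u (t, xf)) F →
        Tendsto (fun x : ℝ => F x - F (-x)) atTop (nhds ((w xf : ℝ)))) ∧
      Continuous w ∧
      ∃ K : Set FiniteAdeles, IsCompact K ∧ ∀ xf ∉ K, w xf = 0 := by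
  classical
  have lamne : lam ≠ 0 := fun h0 => by rw [h0] at hlam; simp at hlam
  have une : ∀ z, u z ≠ 0 := fun z h0 => by have := hs z; rw [h0] at this; simp at this
  -- tail estimates
  have tail : ∀ ε : ℝ, 0 < ε → ∃ K : Set AdeleRingQ, IsCompact K ∧
      ∀ z ∉ K, ‖u z - lam‖ < ε := by
    intro ε hε
    obtain ⟨K, hK1, hK2⟩ :=
      (hasBasis_cocompact.tendsto_iff Metric.nhds_basis_ball).1 hconv ε hε
    refine ⟨K, hK1, fun z hz => ?_⟩
    have := hK2 z hz
    rwa [Metric.mem_ball, dist_eq_norm] at this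
  have bound : ∀ {K : Set AdeleRingQ}, IsCompact K → ∃ T : ℝ, 0 < T ∧
      ∀ (t : ℝ) (y : FiniteAdeles), T ≤ |t| → (t, y) ∉ K := by
    intro K hK
    obtain ⟨C, hC⟩ := (hK.image continuous_fst).isBounded.subset_closedBall 0
    refine ⟨|C| + 1, by positivity, fun t y ht hmem => ?_⟩
    have h1 : t ∈ Metric.closedBall (0:ℝ) C := hC ⟨(t, y), hmem, rfl⟩
    rw [Metric.mem_closedBall, Real.dist_eq, sub_zero] at h1
    have : C ≤ |C| := le_abs_self C
    linarith
  -- basic facts about the slice functions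
  have slice_cont : ∀ xf : FiniteAdeles, Continuous (fun t : ℝ => u (t, xf)) :=
    fun xf => hc.comp (continuous_id.prodMk continuous_const)
  have slice_norm : ∀ (xf : FiniteAdeles) (t : ℝ), ‖u (t, xf)‖ = 1 := fun xf t => hs _
  have tendTop : ∀ xf : FiniteAdeles, Tendsto (fun t : ℝ => u (t, xf)) atTop (nhds lam) := by
    intro xf
    rw [Metric.tendsto_nhds]
    intro ε hε
    obtain ⟨K, hK, hKe⟩ := tail ε hε
    obtain ⟨T, hT, hTK⟩ := bound hK
    filter_upwards [eventually_ge_atTop T] with t ht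
    rw [dist_eq_norm]
    exact hKe _ (hTK t xf (by rw [abs_of_nonneg (hT.le.trans ht)]; exact ht))
  have tendBot : ∀ xf : FiniteAdeles, Tendsto (fun t : ℝ => u (t, xf)) atBot (nhds lam) := by
    intro xf
    rw [Metric.tendsto_nhds]
    intro ε hε
    obtain ⟨K, hK, hKe⟩ := tail ε hε
    obtain ⟨T, hT, hTK⟩ := bound hK
    filter_upwards [eventually_le_atBot (-T)] with t ht
    rw [dist_eq_norm]
    refine hKe _ (hTK t xf ?_)
    rw [abs_of_nonpos (by linarith)]
    linarith
  -- uniform step bound and existence of lifts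
  have liftEx : ∀ xf : FiniteAdeles, ∃ F : ℝ → ℝ, IsLift (fun t : ℝ => u (t, xf)) F := by
    intro xf
    obtain ⟨K, hK, hKe⟩ := tail (1/4) (by norm_num)
    obtain ⟨T, hT, hTK⟩ := bound hK
    have huc := (isCompact_Icc (a := -(T+1)) (b := T+1)).uniformContinuousOn_of_continuous
      ((slice_cont xf).continuousOn)
    rw [Metric.uniformContinuousOn_iff] at huc
    obtain ⟨δ, hδ, hδe⟩ := huc 1 one_pos
    have hstep : ∀ s t : ℝ, |s - t| ≤ min (δ/2) (1/2) → ‖u (s, xf) - u (t, xf)‖ ≤ 1 := by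
      intro s t hst
      have hst2 : |s - t| ≤ 1/2 := le_trans hst (min_le_right _ _)
      have hstδ : |s - t| < δ := lt_of_le_of_lt (le_trans hst (min_le_left _ _)) (by linarith)
      by_cases hcase : s ∈ Set.Icc (-(T+1)) (T+1) ∧ t ∈ Set.Icc (-(T+1)) (T+1)
      · have := hδe s hcase.1 t hcase.2 (by rwa [Real.dist_eq])
        rw [dist_eq_norm] at this
        linarith
      · have habs : T ≤ |s| ∧ T ≤ |t| := by
          have key : ∀ a b : ℝ, |a - b| ≤ 1/2 → a ∉ Set.Icc (-(T+1)) (T+1) →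
              T ≤ |a| ∧ T ≤ |b| := by
            intro a b hab ha
            rw [Set.mem_Icc, not_and_or] at ha
            have h1 : T + 1 < |a| := by
              rcases ha with h | h
              · push_neg at h
                rw [abs_sub_lt_iff] at *
                exact lt_abs.2 (Or.inr (by linarith))
              · push_neg at h
                exact lt_abs.2 (Or.inl h)
            have h2 : |a| - |b| ≤ |a - b| := abs_sub_abs_le_abs_sub a b
            constructor <;> [linarith; linarith]
          rcases not_and_or.1 hcase with h | h
          · exact key s t hst2 h
          · have := key t s (by rwa [abs_sub_comm]) h
            exact ⟨this.2, this.1⟩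
        have h1 := hKe _ (hTK s xf habs.1)
        have h2 := hKe _ (hTK t xf habs.2)
        calc ‖u (s, xf) - u (t, xf)‖
            ≤ ‖u (s, xf) - lam‖ + ‖lam - u (t, xf)‖ := norm_sub_le_norm_sub_add_norm_sub _ _ _
          _ ≤ 1 := by rw [← norm_neg (lam - u (t, xf))] at *; simp only [neg_sub] at *; linarith
    obtain ⟨F, h1, h2⟩ := exists_lift (slice_cont xf) (slice_norm xf)
      (lt_min (by linarith) (by norm_num)) hstep
    exact ⟨F, h1, h2⟩
  -- limits of lifts
  have liftLim : ∀ (xf : FiniteAdeles) (F : ℝ → ℝ), IsLift (fun t : ℝ => u (t, xf)) F →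
      ∃ a b : ℝ, Tendsto F atTop (nhds a) ∧ Tendsto F atBot (nhds b) ∧
        Complex.exp (2 * Real.pi * Complex.I * (a:ℂ)) = lam ∧
        Complex.exp (2 * Real.pi * Complex.I * (b:ℂ)) = lam := by
    intro xf F hF
    obtain ⟨K, hK, hKe⟩ := tail 1 one_pos
    obtain ⟨T, hT, hTK⟩ := bound hK
    obtain ⟨a, ha, hea⟩ := lift_limit hlam (slice_cont xf) (slice_norm xf) hF.2 hF.1
      (Set.self_mem_Ici (a := T)) (Ici_mem_atTop T) isPreconnected_Ici
      (fun x hx => le_of_lt (hKe _ (hTK x xf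
        (by rw [abs_of_nonneg (hT.le.trans hx)]; exact hx)))) (tendTop xf)
    obtain ⟨b, hb, heb⟩ := lift_limit hlam (slice_cont xf) (slice_norm xf) hF.2 hF.1
      (Set.self_mem_Iic (a := -T)) (Iic_mem_atBot (-T)) isPreconnected_Iic
      (fun x hx => le_of_lt (hKe _ (hTK x xf
        (by rw [abs_of_nonpos (by simp at hx ⊢; linarith)]; simp at hx ⊢; linarith))))
      (tendBot xf)
    exact ⟨a, b, ha, hb, hea, heb⟩
  -- chosen lifts
  have F0spec : ∀ xf : FiniteAdeles, IsLift (fun t : ℝ => u (t, xf)) ((liftEx xf).choose) :=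
    fun xf => (liftEx xf).choose_spec
  set F0 : FiniteAdeles → ℝ → ℝ := fun xf => (liftEx xf).choose with hF0
  -- winding number existence
  have wEx : ∀ xf : FiniteAdeles, ∃ n : ℤ,
      Tendsto (fun x : ℝ => F0 xf x - F0 xf (-x)) atTop (nhds ((n:ℤ) : ℝ)) := by
    intro xf
    obtain ⟨a, b, ha, hb, hea, heb⟩ := liftLim xf (F0 xf) (F0spec xf)
    have hsub : Tendsto (fun x : ℝ => F0 xf x - F0 xf (-x)) atTop (nhds (a - b)) :=
      ha.sub (hb.comp tendsto_neg_atTop_atBot)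
    have hone : Complex.exp (2 * Real.pi * Complex.I * ((a - b : ℝ) : ℂ)) = 1 := by
      rw [show a - b = a + (-b) by ring, exp2, expneg, hea, heb]
      exact mul_inv_cancel₀ lamne
    obtain ⟨n, hn⟩ := int_of_exp_eq_one hone
    exact ⟨n, hn ▸ hsub⟩
  set w : FiniteAdeles → ℤ := fun xf => (wEx xf).choose with hw
  have wspec : ∀ xf : FiniteAdeles,
      Tendsto (fun x : ℝ => F0 xf x - F0 xf (-x)) atTop (nhds ((w xf : ℤ) : ℝ)) :=
    fun xf => (wEx xf).choose_spec
  have wUnique : ∀ (xf : FiniteAdeles) (r : ℝ),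
      Tendsto (fun x : ℝ => F0 xf x - F0 xf (-x)) atTop (nhds r) → ((w xf : ℤ) : ℝ) = r :=
    fun xf r h => tendsto_nhds_unique (wspec xf) h
  -- any lift computes the same winding number
  have lift_diff : ∀ (xf : FiniteAdeles) (F : ℝ → ℝ), IsLift (fun t : ℝ => u (t, xf)) F →
      ∀ x : ℝ, F x - F (-x) = F0 xf x - F0 xf (-x) := by
    intro xf F hF x
    have hint : ∀ y : ℝ, ∃ n : ℤ, F y - F0 xf y = n := by
      intro y
      apply int_of_exp_eq_one
      rw [show F y - F0 xf y = F y + (-(F0 xf y)) by ring, exp2, expneg,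
        ← hF.2 y, ← (F0spec xf).2 y]
      exact mul_inv_cancel₀ (une _)
    have hconst := int_valued_const isPreconnected_univ
      ((hF.1.sub (F0spec xf).1).continuousOn) (fun y _ => hint y)
    have h1 := hconst x (Set.mem_univ x) (-x) (Set.mem_univ (-x))
    simp only [Pi.sub_apply] at h1
    linarith
  -- comparison: pointwise-close slices have equal winding numbers
  have compare : ∀ xf yf : FiniteAdeles, (∀ t : ℝ, ‖u (t, yf) - u (t, xf)‖ ≤ 1) →
      w yf = w xf := by
    intro xf yf hclose
    obtain ⟨a₁, b₁, ha₁, hb₁, _, _⟩ := liftLim yf (F0 yf) (F0spec yf)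
    obtain ⟨a₂, b₂, ha₂, hb₂, _, _⟩ := liftLim xf (F0 xf) (F0spec xf)
    have hq1 : Tendsto (fun t : ℝ => u (t, yf) / u (t, xf)) atTop (nhds 1) := by
      have := (tendTop yf).div (tendTop xf) lamne
      rwa [div_self lamne] at this
    have hq2 : Tendsto (fun t : ℝ => u (t, yf) / u (t, xf)) atBot (nhds 1) := by
      have := (tendBot yf).div (tendBot xf) lamne
      rwa [div_self lamne] at this
    have hcmp := winding_compare (slice_cont yf) (slice_cont xf) (slice_norm yf)
      (slice_norm xf) (F0spec yf).1 (F0spec xf).1 (F0spec yf).2 (F0spec xf).2 hclose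
      ha₁ hb₁ ha₂ hb₂ hq1 hq2
    have e1 : ((w yf : ℤ) : ℝ) = a₁ - b₁ :=
      wUnique yf _ (ha₁.sub (hb₁.comp tendsto_neg_atTop_atBot))
    have e2 : ((w xf : ℤ) : ℝ) = a₂ - b₂ :=
      wUnique xf _ (ha₂.sub (hb₂.comp tendsto_neg_atTop_atBot))
    have : ((w yf : ℤ) : ℝ) = ((w xf : ℤ) : ℝ) := by rw [e1, e2, hcmp]
    exact_mod_cast this
  -- local constancy hence continuity
  have wloc : ∀ xf : FiniteAdeles, ∀ᶠ yf in nhds xf, w yf = w xf := by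
    intro xf
    obtain ⟨K, hK, hKe⟩ := tail (1/4) (by norm_num)
    obtain ⟨T, hT, hTK⟩ := bound hK
    have hUopen : IsOpen {p : AdeleRingQ | ‖u p - u (p.1, xf)‖ < 1} := by
      apply isOpen_lt ?_ continuous_const
      exact (hc.sub (hc.comp (continuous_fst.prodMk continuous_const))).norm
    have hsub : Set.Icc (-T) T ×ˢ ({xf} : Set FiniteAdeles) ⊆
        {p : AdeleRingQ | ‖u p - u (p.1, xf)‖ < 1} := by
      rintro ⟨t, y⟩ ⟨_, hy⟩
      rcases hy with rfl
      simp
    obtain ⟨V, W, _, hWopen, hV, hW, hVW⟩ := generalized_tube_lemma isCompact_Icc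
      isCompact_singleton hUopen hsub
    filter_upwards [hWopen.mem_nhds (hW rfl)] with yf hyf
    apply compare xf yf
    intro t
    by_cases hcase : |t| ≤ T
    · have h1 : (t, yf) ∈ {p : AdeleRingQ | ‖u p - u (p.1, xf)‖ < 1} :=
        hVW ⟨hV (abs_le.1 hcase |> fun h => Set.mem_Icc.2 h), hyf⟩
      exact le_of_lt h1
    · push_neg at hcase
      have h1 := hKe _ (hTK t yf hcase.le)
      have h2 := hKe _ (hTK t xf hcase.le)
      calc ‖u (t, yf) - u (t, xf)‖
          ≤ ‖u (t, yf) - lam‖ + ‖lam - u (t, xf)‖ := norm_sub_le_norm_sub_add_norm_sub _ _ _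
        _ ≤ 1 := by rw [← norm_neg (lam - u (t, xf))] at *; simp only [neg_sub] at *; linarith
  have wcont : Continuous w := by
    rw [continuous_iff_continuousAt]
    intro xf
    exact Tendsto.congr' (by filter_upwards [wloc xf] with y hy; exact hy.symm)
      tendsto_const_nhds
  -- compact support
  obtain ⟨K, hK, hKe⟩ := tail 1 one_pos
  refine ⟨w, fun xf => ⟨tendTop xf, tendBot xf⟩, liftEx, ?_, wcont,
    Prod.snd '' K, hK.image continuous_snd, ?_⟩
  · intro xf F hF
    exact Tendsto.congr (fun x => (lift_diff xf F hF x).symm) (wspec xf)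
  · intro xf hxf
    obtain ⟨a₁, b₁, ha₁, hb₁, _, _⟩ := liftLim xf (F0 xf) (F0spec xf)
    have hclose : ∀ t : ℝ, ‖u (t, xf) - lam‖ ≤ 1 := by
      intro t
      refine le_of_lt (hKe _ ?_)
      intro hmem
      exact hxf ⟨(t, xf), hmem, rfl⟩
    have hq1 : Tendsto (fun t : ℝ => u (t, xf) / lam) atTop (nhds 1) := by
      have := (tendTop xf).div_const lam
      rwa [div_self lamne] at this
    have hq2 : Tendsto (fun t : ℝ => u (t, xf) / lam) atBot (nhds 1) := by
      have := (tendBot xf).div_const lam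
      rwa [div_self lamne] at this
    have hcmp := winding_compare (slice_cont xf) continuous_const (slice_norm xf)
      (fun _ => hlam) (F0spec xf).1 continuous_const (F0spec xf).2
      (fun _ => (exp_ph hlam).symm) hclose ha₁ hb₁
      (tendsto_const_nhds : Tendsto (fun _ : ℝ => ph lam) atTop (nhds (ph lam)))
      (tendsto_const_nhds : Tendsto (fun _ : ℝ => ph lam) atBot (nhds (ph lam))) hq1 hq2
    have e1 : ((w xf : ℤ) : ℝ) = a₁ - b₁ :=
      wUnique xf _ (ha₁.sub (hb₁.comp tendsto_neg_atTop_atBot))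
    have : ((w xf : ℤ) : ℝ) = 0 := by rw [e1, hcmp]; ring
    exact_mod_cast this
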